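/- Let P_d, P_g be probability measures on a finite set X and P_l, Q_l the level-l progressively augmented distributions on X × {0,1}^l. For any function D : X × {0,1}^l → (0,1), the value V_l(D) = E_{P_l}[log D] + E_{Q_l}[log(1−D)] is maximized over all such D by D*(x,s) = P_l(x,s)/(P_l(x,s)+Q_l(x,s)), and the maximum value is independent of l: it equals 2·D_JS(P_d‖P_g) − 2 log 2 for every l ≥ 0. -/

import Mathlib

noncomputable def klDivF {X : Type*} [Fintype X] (P Q : X → ℝ) : ℝ :=
  ∑ x, P x * Real.log (P x / Q x)

noncomputable def jsDivF {X : Type*} [Fintype X] (P Q : X → ℝ) : ℝ :=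
  (klDivF P (fun x => (P x + Q x) / 2) + klDivF Q (fun x => (P x + Q x) / 2)) / 2

def IsProbF {X : Type*} [Fintype X] (P : X → ℝ) : Prop :=
  (∀ x, 0 ≤ P x) ∧ ∑ x, P x = 1


noncomputable def PAl {X : Type*} : (l : ℕ) → (P Q : X → ℝ) → X × (Fin l → Bool) → ℝ
  | 0, P, _, p => P p.1
  | (l + 1), P, Q, p =>
      if p.2 (Fin.last l) then PAl l Q P (p.1, fun i => p.2 i.castSucc) / 2
      else PAl l P Q (p.1, fun i => p.2 i.castSucc) / 2

lemma PAl_nonneg {X : Type*} : ∀ (l : ℕ) (P Q : X → ℝ), (∀ x, 0 ≤ P x) → (∀ x, 0 ≤ Q x) →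
    ∀ p, 0 ≤ PAl l P Q p
  | 0, P, Q, hP, _, p => hP p.1
  | (l+1), P, Q, hP, hQ, p => by
      cases h : p.2 (Fin.last l) <;> simp only [PAl, h, if_true, if_false, Bool.false_eq_true]
      · exact div_nonneg (PAl_nonneg l P Q hP hQ _) (by norm_num)
      · exact div_nonneg (PAl_nonneg l Q P hQ hP _) (by norm_num)

lemma PAl_add_pos {X : Type*} : ∀ (l : ℕ) (P Q : X → ℝ), (∀ x, 0 < P x + Q x) →
    ∀ p, 0 < PAl l P Q p + PAl l Q P p
  | 0, P, Q, h, p => h p.1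
  | (l+1), P, Q, h, p => by
      cases hb : p.2 (Fin.last l) <;>
        simp only [PAl, hb, if_true, if_false, Bool.false_eq_true] <;>
        [skip; rw [add_comm]] <;>
      · have := PAl_add_pos l P Q h (p.1, fun i => p.2 i.castSucc)
        linarith

lemma half_div_half (a b : ℝ) : (a/2)/(a/2 + b/2) = a/(a+b) := by
  rcases eq_or_ne (a+b) 0 with h | h
  · have h2 : a/2 + b/2 = 0 := by linarith
    simp [h, h2]
  · rw [show a/2 + b/2 = (a+b)/2 by ring]
    rw [div_div_div_cancel_right₀]
    norm_num

lemma gibbs (a b d : ℝ) (ha : 0 ≤ a) (hb : 0 ≤ b) (hab : 0 < a + b)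
    (hd0 : 0 < d) (hd1 : d < 1) :
    a * Real.log d + b * Real.log (1 - d) ≤ a * Real.log (a/(a+b)) + b * Real.log (b/(a+b)) := by
  rcases eq_or_lt_of_le ha with h | ha
  · have hb' : 0 < b := by linarith
    have : Real.log (1 - d) ≤ 0 := Real.log_nonpos (by linarith) (by linarith)
    have h2 : b/(0+b) = 1 := by rw [zero_add, div_self hb'.ne']
    rw [← h, h2]
    simp only [zero_mul, zero_add, Real.log_one, mul_zero, add_zero]
    exact mul_nonpos_of_nonneg_of_nonpos hb'.le this
  rcases eq_or_lt_of_le hb with h | hb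
  · have : Real.log d ≤ 0 := Real.log_nonpos hd0.le (by linarith)
    have h2 : a/(a+0) = 1 := by rw [add_zero, div_self ha.ne']
    rw [← h, h2]
    simp only [zero_mul, add_zero, Real.log_one, mul_zero, zero_add]
    exact mul_nonpos_of_nonneg_of_nonpos ha.le this
  · have key : ∀ c e : ℝ, 0 < c → 0 < e →
        c * Real.log e - c * Real.log (c/(a+b)) ≤ e*(a+b) - c := by
      intro c e hc he
      have hlog : Real.log (e*(a+b)/c) ≤ e*(a+b)/c - 1 :=
        Real.log_le_sub_one_of_pos (by positivity)
      have heq : Real.log (e*(a+b)/c) = Real.log e - Real.log (c/(a+b)) := by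
        rw [Real.log_div (by positivity) hc.ne', Real.log_mul he.ne' hab.ne',
          Real.log_div hc.ne' hab.ne']
        ring
      rw [heq] at hlog
      have := mul_le_mul_of_nonneg_left hlog hc.le
      have hcancel : c * (e*(a+b)/c - 1) = e*(a+b) - c := by field_simp
      rw [hcancel] at this
      linarith [mul_sub c (Real.log e) (Real.log (c/(a+b))), this]
    have h1 := key a d ha hd0
    have h2 := key b (1-d) hb (by linarith)
    nlinarith

/-- the per-level "optimal value" half -/
noncomputable def Fv {X : Type*} [Fintype X] (l : ℕ) (P Q : X → ℝ) : ℝ :=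
  ∑ p, PAl l P Q p * Real.log (PAl l P Q p / (PAl l P Q p + PAl l Q P p))

lemma sum_split {X : Type*} [Fintype X] (l : ℕ) (f : X × (Fin (l+1) → Bool) → ℝ) :
    ∑ p, f p = ∑ q : X × (Fin l → Bool),
      (f (q.1, Fin.snoc q.2 false) + f (q.1, Fin.snoc q.2 true)) := by
  rw [Fintype.sum_prod_type, Fintype.sum_prod_type]
  congr 1
  ext x
  rw [← Equiv.sum_comp (Fin.snocEquiv (fun _ => Bool)) (fun s => f (x, s))]
  rw [Fintype.sum_prod_type_right]
  simp only [Fin.snocEquiv, Equiv.coe_fn_mk, Fintype.sum_bool]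
  exact Finset.sum_congr rfl fun s _ => add_comm _ _

lemma PAl_snoc_false {X : Type*} (l : ℕ) (P Q : X → ℝ) (x : X) (s : Fin l → Bool) :
    PAl (l+1) P Q (x, Fin.snoc s false) = PAl l P Q (x, s) / 2 := by
  have hinit : (fun i : Fin l => (Fin.snoc s false : Fin (l+1) → Bool) i.castSucc) = s := by
    funext i; simp
  simp [PAl, Fin.snoc_last, hinit]

lemma PAl_snoc_true {X : Type*} (l : ℕ) (P Q : X → ℝ) (x : X) (s : Fin l → Bool) :
    PAl (l+1) P Q (x, Fin.snoc s true) = PAl l Q P (x, s) / 2 := by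
  have hinit : (fun i : Fin l => (Fin.snoc s true : Fin (l+1) → Bool) i.castSucc) = s := by
    funext i; simp
  simp [PAl, Fin.snoc_last, hinit]

lemma Fv_succ {X : Type*} [Fintype X] (l : ℕ) (P Q : X → ℝ) :
    Fv (l+1) P Q = (Fv l P Q + Fv l Q P) / 2 := by
  have step : Fv (l+1) P Q = ∑ q : X × (Fin l → Bool),
      (PAl l P Q q * Real.log (PAl l P Q q / (PAl l P Q q + PAl l Q P q)) / 2 +
       PAl l Q P q * Real.log (PAl l Q P q / (PAl l Q P q + PAl l P Q q)) / 2) := by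
    unfold Fv
    rw [sum_split]
    apply Finset.sum_congr rfl
    intro q _
    rw [PAl_snoc_false, PAl_snoc_false, PAl_snoc_true, PAl_snoc_true]
    rw [half_div_half, half_div_half]
    ring
  rw [step]
  unfold Fv
  rw [Finset.sum_add_distrib, ← Finset.sum_div, ← Finset.sum_div]
  ring

lemma Fv_pair {X : Type*} [Fintype X] (l : ℕ) (P Q : X → ℝ) :
    Fv l P Q + Fv l Q P = Fv 0 P Q + Fv 0 Q P := by
  induction l with
  | zero => rfl
  | succ n ih => rw [Fv_succ, Fv_succ]; linarith

theorem stmt15 {X : Type*} [Fintype X] (P Q : X → ℝ) (hP : IsProbF P) (hQ : IsProbF Q)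
    (hpos : ∀ x, 0 < P x + Q x) :
    ∀ (l : ℕ) (D : X × (Fin l → Bool) → ℝ), (∀ p, 0 < D p ∧ D p < 1) →
      (∑ p, PAl l P Q p * Real.log (D p)) + (∑ p, PAl l Q P p * Real.log (1 - D p)) ≤
        (∑ p, PAl l P Q p * Real.log (PAl l P Q p / (PAl l P Q p + PAl l Q P p))) +
        (∑ p, PAl l Q P p * Real.log (1 - PAl l P Q p / (PAl l P Q p + PAl l Q P p))) ∧
      (∑ p, PAl l P Q p * Real.log (PAl l P Q p / (PAl l P Q p + PAl l Q P p))) +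
        (∑ p, PAl l Q P p * Real.log (1 - PAl l P Q p / (PAl l P Q p + PAl l Q P p))) =
        2 * jsDivF P Q - 2 * Real.log 2 := by
  intro l D hD
  have hA : ∀ p, 0 ≤ PAl l P Q p := PAl_nonneg l P Q hP.1 hQ.1
  have hB : ∀ p, 0 ≤ PAl l Q P p := PAl_nonneg l Q P hQ.1 hP.1
  have hAB : ∀ p, 0 < PAl l P Q p + PAl l Q P p := PAl_add_pos l P Q hpos
  have hrw : ∀ p : X × (Fin l → Bool),
      1 - PAl l P Q p / (PAl l P Q p + PAl l Q P p) =
        PAl l Q P p / (PAl l Q P p + PAl l P Q p) := by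
    intro p
    have h : PAl l P Q p + PAl l Q P p ≠ 0 := (hAB p).ne'
    rw [add_comm (PAl l Q P p)]
    field_simp
    ring
  simp only [hrw]
  constructor
  · rw [← Finset.sum_add_distrib, ← Finset.sum_add_distrib]
    apply Finset.sum_le_sum
    intro p _
    have := gibbs (PAl l P Q p) (PAl l Q P p) (D p) (hA p) (hB p) (hAB p) (hD p).1 (hD p).2
    rw [add_comm (PAl l Q P p) (PAl l P Q p)]
    exact this
  · have hV : (∑ p, PAl l P Q p * Real.log (PAl l P Q p / (PAl l P Q p + PAl l Q P p))) +
        (∑ p, PAl l Q P p * Real.log (PAl l Q P p / (PAl l Q P p + PAl l P Q p))) =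
        Fv 0 P Q + Fv 0 Q P := Fv_pair l P Q
    rw [hV]
    -- compute Fv 0
    have hF0 : ∀ R S : X → ℝ, Fv 0 R S = ∑ x, R x * Real.log (R x / (R x + S x)) := by
      intro R S
      unfold Fv
      rw [Fintype.sum_prod_type]
      apply Finset.sum_congr rfl
      intro x _
      have huniq : ∀ f : (Fin 0 → Bool) → ℝ,
          ∑ y, f y = f (fun i => i.elim0) := by
        intro f
        rw [Fintype.sum_unique f]
        congr 1
      rw [huniq]
      rfl
    rw [hF0, hF0]
    have hkl : ∀ R S : X → ℝ, (∀ x, 0 ≤ R x) → (∀ x, 0 < R x + S x) → (∑ x, R x = 1) →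
        klDivF R (fun x => (R x + S x)/2) =
          (∑ x, R x * Real.log (R x / (R x + S x))) + Real.log 2 := by
      intro R S hR hRS hsum
      unfold klDivF
      rw [show (∑ x, R x * Real.log (R x / (R x + S x))) + Real.log 2 =
        ∑ x, (R x * Real.log (R x / (R x + S x)) + R x * Real.log 2) by
          rw [Finset.sum_add_distrib, ← Finset.sum_mul, hsum, one_mul]]
      apply Finset.sum_congr rfl
      intro x _
      rcases eq_or_lt_of_le (hR x) with h | h
      · simp [← h]
      · have hpos' := hRS x
        have : R x / ((R x + S x)/2) = R x / (R x + S x) * 2 := by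
          field_simp
        rw [this, Real.log_mul (by positivity) two_ne_zero]
        ring
    have h1 := hkl P Q hP.1 hpos hP.2
    have h2 := hkl Q P hQ.1 (fun x => by linarith [hpos x]) hQ.2
    unfold jsDivF
    rw [show (fun x => (Q x + P x)/2) = (fun x => (P x + Q x)/2) from by
      ext x; ring] at h2
    rw [h1, h2]
    ring
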